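/- Consider f as in (P₁), define h̄(x,u,w) = Σᵢ(½αᵢxᵢ² + bᵢxᵢ) + Σⱼ uⱼwⱼ, let c₁ ≤ c₂ and v ∈ ℝ, and suppose: (i) there exists a point v̄ with c₁ ≤ h̄(v̄) ≤ c₂; (ii) for each i ∈ {1,2}, it is NOT the case that A_s is positive semidefinite and there exists ω with b_s = A_sω and cᵢ = ½ωᵀA_sω; and (iii) A_s ≠ 0. Then the following are equivalent: (I₁) for every (x,u,w), c₁ ≤ h̄(x,u,w) ≤ c₂ implies f(x,u,w) + v ≥ 0; (I₂) for every x, y ∈ ℝ^l and z ∈ ℝ^k satisfying c₁ ≤ Σᵢ(αᵢyᵢ + bᵢxᵢ) + Σⱼ zⱼ ≤ c₂ and ½xᵢ² ≤ yᵢ for all i, one has Σᵢ(δᵢyᵢ + eᵢxᵢ) + Σⱼ ζⱼzⱼ + c₀ + v ≥ 0. -/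

import Mathlib

open scoped Classical
open Matrix

/-- The objective `f(x,u,w) = Σᵢ(½δᵢxᵢ² + eᵢxᵢ) + Σⱼ(ζⱼuⱼwⱼ + ½wⱼ² + ηⱼwⱼ)` of problem (P₁). -/
noncomputable def quadObj {l k : ℕ} (δ e : Fin l → ℝ) (ζ η : Fin k → ℝ)
    (x : Fin l → ℝ) (u w : Fin k → ℝ) : ℝ :=
  (∑ i, ((1/2) * δ i * x i ^ 2 + e i * x i)) +
    ∑ j, (ζ j * u j * w j + (1/2) * w j ^ 2 + η j * w j)

/-- The constraint function `h̄(x,u,w) = Σᵢ(½αᵢxᵢ² + bᵢxᵢ) + Σⱼ uⱼwⱼ` (no constant term). -/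
noncomputable def quadConBar {l k : ℕ} (α b : Fin l → ℝ)
    (x : Fin l → ℝ) (u w : Fin k → ℝ) : ℝ :=
  (∑ i, ((1/2) * α i * x i ^ 2 + b i * x i)) + ∑ j, u j * w j

/-- The SOCP objective `Σᵢ(δᵢyᵢ + eᵢxᵢ) + Σⱼ ζⱼzⱼ + c₀` of the reformulation. -/
noncomputable def socpObj {l k : ℕ} (δ e : Fin l → ℝ) (ζ : Fin k → ℝ) (c₀ : ℝ)
    (x y : Fin l → ℝ) (z : Fin k → ℝ) : ℝ :=
  (∑ i, (δ i * y i + e i * x i)) + (∑ j, ζ j * z j) + c₀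

/-- The linear part `Σᵢ(αᵢyᵢ + bᵢxᵢ) + Σⱼ zⱼ` of the SOCP constraint. -/
noncomputable def socpConLhs {l k : ℕ} (α b : Fin l → ℝ)
    (x y : Fin l → ℝ) (z : Fin k → ℝ) : ℝ :=
  (∑ i, (α i * y i + b i * x i)) + ∑ j, z j

/-- The `(l+2k) × (l+2k)` real symmetric matrix
`A_s = blockDiag(α₁, …, α_l, E₂, …, E₂)` with `k` copies of `E₂ = [[0,1],[1,0]]`. -/
noncomputable def Asmat (l k : ℕ) (α : Fin l → ℝ) :
    Matrix (Fin (l + 2 * k)) (Fin (l + 2 * k)) ℝ :=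
  fun i j =>
    if hi : (i : ℕ) < l then (if i = j then α ⟨(i : ℕ), hi⟩ else 0)
    else if _hj : (j : ℕ) < l then 0
    else if ((i : ℕ) - l) / 2 = ((j : ℕ) - l) / 2 ∧ ((i : ℕ) - l) % 2 ≠ ((j : ℕ) - l) % 2
      then 1 else 0

/-- The vector `b_s = (b₁, …, b_l, 0, …, 0) ∈ ℝ^{l+2k}`. -/
noncomputable def bsvec (l k : ℕ) (b : Fin l → ℝ) : Fin (l + 2 * k) → ℝ :=
  fun i => if hi : (i : ℕ) < l then b ⟨(i : ℕ), hi⟩ else 0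

/-- The degenerate case excluded by Assumption 3.2 of Jiang–Li–Wu: `A_s ⪰ 0`,
`b_s ∈ Range(A_s)` and `c' = ½ωᵀA_sω` for `ω` with `b_s = A_sω`. -/
def DegenerateCase (l k : ℕ) (α b : Fin l → ℝ) (c' : ℝ) : Prop :=
  (Asmat l k α).PosSemidef ∧ ∃ ω : Fin (l + 2 * k) → ℝ,
    bsvec l k b = (Asmat l k α).mulVec ω ∧ c' = (1/2) * (ω ⬝ᵥ (Asmat l k α).mulVec ω)

lemma root_lemma (a bb cc γ x0 : ℝ) (ha : a ≠ 0)
    (hstr : a * (a/2 * x0^2 + bb*x0 - γ) ≤ 0) :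
    ∃ r : ℝ, a/2*r^2 + bb*r = γ ∧ cc*r ≤ cc*x0 := by
  have hd : 0 ≤ bb^2 + 2*a*γ := by nlinarith [sq_nonneg (a*x0 + bb)]
  set d := bb^2+2*a*γ with hdd
  have hsq : Real.sqrt d ^ 2 = d := Real.sq_sqrt hd
  set r1 := (-bb + Real.sqrt d)/a with hr1
  set r2 := (-bb - Real.sqrt d)/a with hr2
  have e1 : a*r1 + bb = Real.sqrt d := by rw [hr1]; field_simp; ring
  have e2 : a*r2 + bb = -Real.sqrt d := by rw [hr2]; field_simp; ring
  have h2a : (2*a) ≠ 0 := by simp [ha]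
  have hg1 : a/2*r1^2 + bb*r1 = γ := by
    apply mul_left_cancel₀ h2a
    have h5 : (a*r1+bb)^2 = d := by rw [e1]; exact hsq
    linear_combination h5 + hdd
  have hg2 : a/2*r2^2 + bb*r2 = γ := by
    apply mul_left_cancel₀ h2a
    have h5 : (a*r2+bb)^2 = d := by rw [e2, neg_sq]; exact hsq
    linear_combination h5 + hdd
  have hfact : (a*x0 - a*r1)*(a*x0 - a*r2) = 2*(a*(a/2*x0^2 + bb*x0 - γ)) := by
    have g1 : a*x0 - a*r1 = (a*x0+bb) - Real.sqrt d := by linear_combination - e1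
    have g2 : a*x0 - a*r2 = (a*x0+bb) + Real.sqrt d := by linear_combination - e2
    rw [g1, g2]
    linear_combination - hsq - hdd
  have hprod : (x0 - r1)*(x0 - r2) ≤ 0 := by
    by_contra hP
    push_neg at hP
    have ha2 : 0 < a^2 := by positivity
    nlinarith [mul_pos ha2 hP]
  rcases le_or_gt (cc*r1) (cc*x0) with h | h
  · exact ⟨r1, hg1, h⟩
  · refine ⟨r2, hg2, ?_⟩
    have h3 : cc*(x0 - r1) < 0 := by rw [mul_sub]; linarith
    have h4 : 0 ≤ cc*(x0 - r2) := by
      by_contra h4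
      push_neg at h4
      nlinarith [mul_pos_of_neg_of_neg h3 h4, mul_nonneg (sq_nonneg cc) (neg_nonneg.mpr hprod)]
    rw [mul_sub] at h4; linarith

set_option maxHeartbeats 1000000 in
lemma key0 (l : ℕ) (δ e α b : Fin l → ℝ) (c₁ c₂ v : ℝ)
    (q : Fin l) (hq : α q ≠ 0)
    (h1 : ∀ x' : Fin l → ℝ, c₁ ≤ ∑ i, ((1/2) * α i * x' i ^ 2 + b i * x' i) →
      (∑ i, ((1/2) * α i * x' i ^ 2 + b i * x' i)) ≤ c₂ →
      0 ≤ (∑ i, ((1/2) * δ i * x' i ^ 2 + e i * x' i)) + v)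
    (x y : Fin l → ℝ) (hy : ∀ i, (1/2) * x i ^ 2 ≤ y i)
    (hc1 : c₁ ≤ ∑ i, (α i * y i + b i * x i))
    (hc2 : (∑ i, (α i * y i + b i * x i)) ≤ c₂) :
    0 ≤ (∑ i, (δ i * y i + e i * x i)) + v := by
  have hynn : ∀ i, 0 ≤ y i := fun i => le_trans (by positivity) (hy i)
  set B : Finset (Fin l) := Finset.univ.filter (fun i => α i = 0 ∧ δ i < 0) with hB
  have hmemB : ∀ i ∈ B, α i = 0 ∧ δ i < 0 := fun i hi => (Finset.mem_filter.mp hi).2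
  have hqB : q ∉ B := fun h => hq ((Finset.mem_filter.mp h).2.1)
  -- sign choices
  obtain ⟨σ, hσd, hσ2⟩ : ∃ σ : Fin l → ℝ, (∀ i, σ i = 1 ∨ σ i = -1) ∧
      (∀ i, α q * b i * σ i = -|α q * b i|) := by
    refine ⟨fun i => if 0 ≤ α q * b i then -1 else 1, fun i => ?_, fun i => ?_⟩ <;> simp only []
    · split
      · right; rfl
      · left; rfl
    · split
      · rename_i h; rw [abs_of_nonneg h]; ring
      · rename_i h; push_neg at h; rw [abs_of_neg h]; ring
  have hσsq : ∀ i, σ i ^ 2 = 1 := by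
    intro i; rcases hσd i with h | h <;> rw [h] <;> norm_num
  -- constants
  set Eb := ∑ i ∈ B, |b i| with hEbd
  set Ee := ∑ i ∈ B, |e i| with hEed
  set W := ∑ i ∈ B, (-δ i) * y i with hWd
  set β := ∑ i ∈ B, (-δ i) with hβd
  set Q := |δ q / α q| * (2 * Eb) with hQd
  have hEb : 0 ≤ Eb := Finset.sum_nonneg (fun i _ => abs_nonneg _)
  have hEe : 0 ≤ Ee := Finset.sum_nonneg (fun i _ => abs_nonneg _)
  have hW : 0 ≤ W := Finset.sum_nonneg (fun i hi =>
    mul_nonneg (by have := (hmemB i hi).2; linarith) (hynn i))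
  have hβ : 0 ≤ β := Finset.sum_nonneg (fun i hi => by have := (hmemB i hi).2; linarith)
  have hQ : 0 ≤ Q := mul_nonneg (abs_nonneg _) (by linarith)
  set s := 1 + (2/β) * (2*Ee + Q + W) + ∑ i ∈ B, |x i| with hs
  have hsum_absx : 0 ≤ ∑ i ∈ B, |x i| := Finset.sum_nonneg (fun i _ => abs_nonneg _)
  have hdiv : 0 ≤ (2/β) * (2*Ee + Q + W) :=
    mul_nonneg (div_nonneg (by norm_num) hβ) (by linarith)
  have hs1 : 1 ≤ s := by rw [hs]; linarith
  have hs0 : 0 < s := by linarith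
  have hsx : ∀ i ∈ B, |x i| ≤ s := by
    intro i hi
    have h2 : |x i| ≤ ∑ i ∈ B, |x i| :=
      Finset.single_le_sum (fun j _ => abs_nonneg (x j)) hi
    rw [hs]; linarith
  set Δ := ∑ i ∈ B, b i * (σ i * s - x i) with hΔd
  clear_value Eb Ee W β Q s Δ
  have hαΔ : α q * Δ ≤ 0 := by
    rw [hΔd, Finset.mul_sum]
    apply Finset.sum_nonpos
    intro i hi
    have h2 := hσ2 i
    have h3 : -(α q * b i * x i) ≤ |α q * b i| * s := by
      calc -(α q * b i * x i) ≤ |α q * b i * x i| := neg_le_abs _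
        _ = |α q * b i| * |x i| := abs_mul _ _
        _ ≤ |α q * b i| * s := mul_le_mul_of_nonneg_left (hsx i hi) (abs_nonneg _)
    have : α q * (b i * (σ i * s - x i)) = (α q * b i * σ i) * s - α q * b i * x i := by ring
    rw [this, h2]
    linarith
  have hΔabs : |Δ| ≤ 2 * Eb * s := by
    calc |Δ| = |∑ i ∈ B, b i * (σ i * s - x i)| := by rw [hΔd]
      _ ≤ ∑ i ∈ B, |b i * (σ i * s - x i)| := Finset.abs_sum_le_sum_abs _ _
      _ ≤ ∑ i ∈ B, |b i| * (2*s) := by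
          apply Finset.sum_le_sum
          intro i hi
          rw [abs_mul]
          apply mul_le_mul_of_nonneg_left _ (abs_nonneg _)
          calc |σ i * s - x i| ≤ |σ i * s| + |x i| := abs_sub _ _
            _ = |σ i| * s + |x i| := by rw [abs_mul, abs_of_pos hs0]
            _ ≤ 1 * s + s := by
                have habs : |σ i| = 1 := by
                  rcases hσd i with h | h <;> rw [h] <;> norm_num
                rw [habs]
                have := hsx i hi
                linarith
            _ = 2*s := by ring
      _ = 2 * Eb * s := by rw [← Finset.sum_mul, hEbd]; ring
  have hgrow : Q*s + (-(1/2)*β*s^2 + 2*Ee*s + W) ≤ 0 := by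
    rcases Finset.eq_empty_or_nonempty B with hBe | hBne
    · have h0 : Eb = 0 := by rw [hEbd, hBe]; simp
      have h1 : Ee = 0 := by rw [hEed, hBe]; simp
      have h2 : W = 0 := by rw [hWd, hBe]; simp
      have h3 : β = 0 := by rw [hβd, hBe]; simp
      have h4 : Q = 0 := by rw [hQd, h0]; ring
      rw [h1, h2, h3, h4]
      nlinarith [sq_nonneg s]
    · have hβpos : 0 < β := by
        rw [hβd]
        apply Finset.sum_pos (fun i hi => by have := (hmemB i hi).2; linarith) hBne
      have hG : 0 ≤ 2*Ee + Q + W := by linarith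
      have h2 : (2/β) * (2*Ee + Q + W) ≤ s := by rw [hs]; linarith
      have h2' : 2 * (2*Ee + Q + W) ≤ s * β := by
        rw [div_mul_eq_mul_div, div_le_iff₀ hβpos] at h2
        linarith
      nlinarith [mul_le_mul_of_nonneg_right h2' hs0.le,
        mul_nonneg hW (sub_nonneg.mpr hs1), mul_nonneg hEe (sub_nonneg.mpr hs0.le),
        mul_nonneg hQ (sub_nonneg.mpr hs0.le)]
  -- the root at q
  obtain ⟨rq, hrq1, hrq2⟩ : ∃ r : ℝ, α q/2*r^2 + b q*r = α q * y q + b q * x q - Δ ∧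
      (e q - δ q*b q/α q)*r ≤ (e q - δ q*b q/α q)*(x q) := by
    apply root_lemma _ _ _ _ _ hq
    have h2 := hy q
    nlinarith [sq_nonneg (α q)]
  -- roots elsewhere
  have hroots : ∀ i : Fin l, α i ≠ 0 → ∃ r : ℝ,
      α i/2*r^2 + b i*r = α i * y i + b i * x i ∧
      (e i - δ i*b i/α i)*r ≤ (e i - δ i*b i/α i)*(x i) := by
    intro i hi
    apply root_lemma _ _ _ _ _ hi
    have h2 := hy i
    nlinarith [sq_nonneg (α i)]
  -- the witness point
  obtain ⟨X, hgX, hfX⟩ : ∃ X : Fin l → ℝ,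
      (∀ i, (1/2) * α i * X i ^ 2 + b i * X i
        = α i * y i + b i * x i + ((if i = q then -Δ else 0)
          + (if i ∈ B then b i * (σ i * s - x i) else 0))) ∧
      (∀ i, (1/2) * δ i * X i ^ 2 + e i * X i
        ≤ δ i * y i + e i * x i + ((if i = q then |δ q / α q| * |Δ| else 0)
          + (if i ∈ B then (1/2) * δ i * s^2 + |e i| * s - (δ i * y i + e i * x i) else 0))) := by
    refine ⟨fun i => if i = q then rq else
      (if h : α i ≠ 0 then (hroots i h).choose else (if i ∈ B then σ i * s else x i)),
      ?_, ?_⟩ <;> intro i <;> simp only []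
    · rcases eq_or_ne i q with hiq | hiq
      · rw [if_pos hiq, if_pos hiq, hiq, if_neg hqB]
        linear_combination hrq1
      · rw [if_neg hiq, if_neg hiq]
        by_cases hα : α i ≠ 0
        · have hiB : i ∉ B := fun hmem => hα ((hmemB i hmem).1)
          rw [dif_pos hα, if_neg hiB]
          have hsp := (hroots i hα).choose_spec.1
          linear_combination hsp
        · rw [dif_neg hα]
          have hα0 : α i = 0 := not_not.mp hα
          by_cases hiB : i ∈ B
          · rw [if_pos hiB, if_pos hiB, hα0]; ring
          · rw [if_neg hiB, if_neg hiB, hα0]; ring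
    · rcases eq_or_ne i q with hiq | hiq
      · rw [if_pos hiq, if_pos hiq, hiq, if_neg hqB]
        have h3 : (1/2) * δ q * rq^2 + e q * rq
            = δ q / α q * (α q/2*rq^2 + b q*rq) + (e q - δ q * b q / α q) * rq := by
          field_simp
          ring
        rw [hrq1] at h3
        have h4 : δ q / α q * (α q * y q + b q * x q - Δ)
            = δ q * y q + δ q * b q / α q * x q - δ q / α q * Δ := by
          field_simp
        have habs : -(δ q / α q * Δ) ≤ |δ q / α q| * |Δ| := by
          calc -(δ q / α q * Δ) ≤ |δ q / α q * Δ| := neg_le_abs _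
            _ = |δ q / α q| * |Δ| := abs_mul _ _
        have h5 := hrq2
        linarith
      · rw [if_neg hiq, if_neg hiq]
        by_cases hα : α i ≠ 0
        · have hiB : i ∉ B := fun hmem => hα ((hmemB i hmem).1)
          rw [dif_pos hα, if_neg hiB]
          obtain ⟨hsp1, hsp2⟩ := (hroots i hα).choose_spec
          set r := (hroots i hα).choose
          have h3 : (1/2) * δ i * r^2 + e i * r
              = δ i / α i * (α i/2*r^2 + b i*r) + (e i - δ i * b i / α i) * r := by
            field_simp
            ring
          rw [hsp1] at h3
          have h4 : δ i / α i * (α i * y i + b i * x i)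
              = δ i * y i + δ i * b i / α i * x i := by
            field_simp
          linarith
        · rw [dif_neg hα]
          have hα0 : α i = 0 := not_not.mp hα
          by_cases hiB : i ∈ B
          · rw [if_pos hiB, if_pos hiB]
            have h5 : (σ i * s)^2 = s^2 := by rw [mul_pow, hσsq i]; ring
            have h6 : e i * (σ i * s) ≤ |e i| * s := by
              calc e i * (σ i * s) ≤ |e i * (σ i * s)| := le_abs_self _
                _ = |e i| * (|σ i| * |s|) := by rw [abs_mul, abs_mul]
                _ = |e i| * s := by
                    have habs : |σ i| = 1 := by
                      rcases hσd i with h | h <;> rw [h] <;> norm_num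
                    rw [habs, abs_of_pos hs0, one_mul]
            rw [h5]
            linarith
          · rw [if_neg hiB, if_neg hiB]
            have hδ : 0 ≤ δ i := by
              by_contra hneg
              exact hiB (Finset.mem_filter.mpr ⟨Finset.mem_univ _, hα0, lt_of_not_ge hneg⟩)
            have := hy i
            nlinarith
  -- assemble the sums
  have a1 : ∑ i, (if i = q then -Δ else 0) = -Δ := by simp
  have a2 : ∑ i, (if i ∈ B then b i * (σ i * s - x i) else 0) = Δ := by
    rw [Finset.sum_ite_mem, Finset.univ_inter, hΔd]
  have hgsum : ∑ i, ((1/2) * α i * X i ^ 2 + b i * X i) = ∑ i, (α i * y i + b i * x i) := by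
    calc ∑ i, ((1/2) * α i * X i ^ 2 + b i * X i)
        = ∑ i, (α i * y i + b i * x i + ((if i = q then -Δ else 0)
            + (if i ∈ B then b i * (σ i * s - x i) else 0))) :=
          Finset.sum_congr rfl (fun i _ => hgX i)
      _ = (∑ i, (α i * y i + b i * x i)) + ((∑ i, (if i = q then -Δ else 0))
            + ∑ i, (if i ∈ B then b i * (σ i * s - x i) else 0)) := by
          rw [← Finset.sum_add_distrib, ← Finset.sum_add_distrib]
      _ = ∑ i, (α i * y i + b i * x i) := by rw [a1, a2]; ring
  have hKey := h1 X (by rw [hgsum]; exact hc1) (by rw [hgsum]; exact hc2)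
  have a3 : ∑ i, (if i = q then |δ q / α q| * |Δ| else 0) = |δ q / α q| * |Δ| := by simp
  have hsumδ : ∑ i ∈ B, δ i = -β := by
    have h7 : β = -∑ i ∈ B, δ i := by rw [hβd, ← Finset.sum_neg_distrib]
    linarith
  have a4 : ∑ i, (if i ∈ B then (1/2) * δ i * s^2 + |e i| * s - (δ i * y i + e i * x i) else 0)
      ≤ -(1/2)*β*s^2 + 2*Ee*s + W := by
    rw [Finset.sum_ite_mem, Finset.univ_inter]
    calc ∑ i ∈ B, ((1/2) * δ i * s^2 + |e i| * s - (δ i * y i + e i * x i))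
        ≤ ∑ i ∈ B, (δ i * (s^2 * (1/2)) + |e i| * (2*s) + (-δ i) * y i) := by
          apply Finset.sum_le_sum
          intro i hi
          have h5 : -(e i * x i) ≤ |e i| * s := by
            calc -(e i * x i) ≤ |e i * x i| := neg_le_abs _
              _ = |e i| * |x i| := abs_mul _ _
              _ ≤ |e i| * s := mul_le_mul_of_nonneg_left (hsx i hi) (abs_nonneg _)
          have h6 : 0 ≤ |e i| * s := mul_nonneg (abs_nonneg _) hs0.le
          linarith
      _ = (∑ i ∈ B, δ i) * (s^2 * (1/2)) + Ee * (2*s) + W := by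
          rw [Finset.sum_add_distrib, Finset.sum_add_distrib, ← Finset.sum_mul,
            ← Finset.sum_mul, hEed, hWd]
      _ = -(1/2)*β*s^2 + 2*Ee*s + W := by rw [hsumδ]; ring
  have a5 : |δ q / α q| * |Δ| ≤ Q * s := by
    calc |δ q / α q| * |Δ| ≤ |δ q / α q| * (2 * Eb * s) :=
          mul_le_mul_of_nonneg_left hΔabs (abs_nonneg _)
      _ = Q * s := by rw [hQd]; ring
  have hfsum : ∑ i, ((1/2) * δ i * X i ^ 2 + e i * X i) ≤ ∑ i, (δ i * y i + e i * x i) := by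
    calc ∑ i, ((1/2) * δ i * X i ^ 2 + e i * X i)
        ≤ ∑ i, (δ i * y i + e i * x i + ((if i = q then |δ q / α q| * |Δ| else 0)
          + (if i ∈ B then (1/2) * δ i * s^2 + |e i| * s - (δ i * y i + e i * x i) else 0))) :=
          Finset.sum_le_sum (fun i _ => hfX i)
      _ = (∑ i, (δ i * y i + e i * x i)) + ((∑ i, (if i = q then |δ q / α q| * |Δ| else 0))
          + ∑ i, (if i ∈ B then (1/2) * δ i * s^2 + |e i| * s - (δ i * y i + e i * x i) else 0)) := by
          rw [← Finset.sum_add_distrib, ← Finset.sum_add_distrib]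
      _ ≤ ∑ i, (δ i * y i + e i * x i) := by
          rw [a3]
          linarith [hgrow]
  linarith


lemma key1 (l k : ℕ) (hk : 0 < k) (δ e α b : Fin l → ℝ) (ζ η : Fin k → ℝ)
    (c₀ c₁ c₂ v : ℝ) (hc₀ : c₀ = -(1/2) * ∑ j, η j ^ 2)
    (h1 : ∀ (x : Fin l → ℝ) (u w : Fin k → ℝ),
        c₁ ≤ quadConBar α b x u w → quadConBar α b x u w ≤ c₂ →
        0 ≤ quadObj δ e ζ η x u w + v)
    (x y : Fin l → ℝ) (z : Fin k → ℝ)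
    (hc1 : c₁ ≤ socpConLhs α b x y z) (hc2 : socpConLhs α b x y z ≤ c₂)
    (hy : ∀ i, (1/2) * x i ^ 2 ≤ y i) :
    0 ≤ socpObj δ e ζ c₀ x y z + v := by
  suffices H : ∀ ε : ℝ, 0 < ε → 0 ≤ socpObj δ e ζ c₀ x y z + v + (k:ℝ) * ε^2 / 2 by
    by_contra hT
    push_neg at hT
    set T := socpObj δ e ζ c₀ x y z + v with hTdef
    have hk' : (0:ℝ) < (k:ℝ) := by exact_mod_cast hk
    have hTk : 0 < -T / (k:ℝ) := div_pos (by linarith) hk'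
    have hε : 0 < Real.sqrt (-T / (k:ℝ)) := Real.sqrt_pos.mpr hTk
    have h2 := H _ hε
    rw [Real.sq_sqrt hTk.le] at h2
    have h3 : (k:ℝ) * (-T / (k:ℝ)) = -T := mul_div_cancel₀ _ (ne_of_gt hk')
    rw [h3] at h2
    linarith
  intro ε hε
  have hynn : ∀ i, 0 ≤ y i := fun i => le_trans (by positivity) (hy i)
  set lam := ζ ⟨0, hk⟩ with hlam
  -- the flipped x'
  obtain ⟨x', hx'sq, hcx'⟩ : ∃ x' : Fin l → ℝ, (∀ i, x' i ^ 2 = 2 * y i) ∧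
      (∀ i, (e i - lam * b i) * x' i ≤ (e i - lam * b i) * x i) := by
    refine ⟨fun i => (if 0 ≤ e i - lam * b i then -1 else 1) * Real.sqrt (2 * y i), ?_, ?_⟩ <;>
      intro i <;> simp only []
    · have hs : Real.sqrt (2 * y i) ^ 2 = 2 * y i := Real.sq_sqrt (by have := hynn i; linarith)
      split <;> rw [mul_pow] <;> rw [hs] <;> ring
    · have hs : Real.sqrt (2 * y i) ^ 2 = 2 * y i := Real.sq_sqrt (by have := hynn i; linarith)
      have hsn : 0 ≤ Real.sqrt (2 * y i) := Real.sqrt_nonneg _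
      have hxle : x i ≤ Real.sqrt (2 * y i) := by nlinarith [hy i]
      have hxge : -Real.sqrt (2 * y i) ≤ x i := by nlinarith [hy i]
      split
      · rename_i h; nlinarith
      · rename_i h; push_neg at h; nlinarith
  set D := ∑ i, b i * (x' i - x i) with hD
  set z' : Fin k → ℝ := fun j => z j + (if j = ⟨0, hk⟩ then -D else 0) with hz'
  clear_value z'
  obtain ⟨w, u, huw, hwη⟩ : ∃ w u : Fin k → ℝ, (∀ j, u j * w j = z' j) ∧
      (∀ j, (w j + η j) ^ 2 ≤ ε ^ 2) := by
    refine ⟨fun j => if η j = 0 then (if z' j = 0 then 0 else ε) else -η j,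
      fun j => if (if η j = 0 then (if z' j = 0 then 0 else ε) else -η j) = 0 then 0
        else z' j / (if η j = 0 then (if z' j = 0 then 0 else ε) else -η j), ?_, ?_⟩ <;>
      intro j <;> simp only []
    · rcases eq_or_ne (η j) 0 with hη | hη
      · rcases eq_or_ne (z' j) 0 with hz0 | hz0
        · simp [hη, hz0]
        · rw [if_pos hη, if_neg hz0, if_neg (ne_of_gt hε), div_mul_cancel₀ _ (ne_of_gt hε)]
      · rw [if_neg hη, if_neg (by simpa using hη), div_mul_cancel₀ _ (by simpa using hη)]
    · rcases eq_or_ne (η j) 0 with hη | hη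
      · rcases eq_or_ne (z' j) 0 with hz0 | hz0
        · rw [if_pos hη, if_pos hz0, hη]; norm_num; positivity
        · rw [if_pos hη, if_neg hz0, hη]; simp
      · rw [if_neg hη]; simp [sq_nonneg ε]
  -- constraint value
  have hsum_z' : ∑ j, z' j = (∑ j, z j) - D := by
    rw [hz']
    rw [Finset.sum_add_distrib]
    simp [Finset.sum_ite_eq', sub_eq_add_neg]
  have hsum_ζz' : ∑ j, ζ j * z' j = (∑ j, ζ j * z j) - lam * D := by
    have : ∀ j, ζ j * z' j = ζ j * z j + (if j = ⟨0, hk⟩ then -(ζ j * D) else 0) := by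
      intro j
      rw [hz']
      simp only []
      split <;> ring
    rw [Finset.sum_congr rfl (fun j _ => this j), Finset.sum_add_distrib]
    simp [Finset.sum_ite_eq', hlam]
    ring
  have hconval : quadConBar α b x' u w = socpConLhs α b x y z := by
    rw [quadConBar, socpConLhs]
    have h4 : ∀ i, (1/2) * α i * x' i ^ 2 + b i * x' i
        = α i * y i + b i * x i + b i * (x' i - x i) := by
      intro i; rw [hx'sq i]; ring
    rw [Finset.sum_congr rfl (fun i _ => h4 i), Finset.sum_add_distrib,
      Finset.sum_congr rfl (fun j _ => (huw j)), hsum_z']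
    rw [← hD]
    ring
  have hcon1 : c₁ ≤ quadConBar α b x' u w := by rw [hconval]; exact hc1
  have hcon2 : quadConBar α b x' u w ≤ c₂ := by rw [hconval]; exact hc2
  have hobj := h1 x' u w hcon1 hcon2
  -- objective comparison
  have h10 : ∑ j : Fin k, (1/2:ℝ) * η j ^ 2 = -c₀ := by
    rw [hc₀, neg_mul, neg_neg]
    exact (Finset.mul_sum _ _ _).symm
  have hobjle : quadObj δ e ζ η x' u w ≤ socpObj δ e ζ c₀ x y z + (k:ℝ) * ε^2/2 := by
    rw [quadObj, socpObj]
    have hsumA : ∑ i, ((1/2) * δ i * x' i ^ 2 + e i * x' i)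
        ≤ (∑ i, (δ i * y i + e i * x i)) + lam * D := by
      calc ∑ i, ((1/2) * δ i * x' i ^ 2 + e i * x' i)
          ≤ ∑ i, (δ i * y i + e i * x i + lam * (b i * (x' i - x i))) := by
            apply Finset.sum_le_sum
            intro i _
            have h1 := hcx' i
            have h2 : (1/2) * δ i * x' i ^ 2 = δ i * y i := by rw [hx'sq i]; ring
            linarith
        _ = (∑ i, (δ i * y i + e i * x i)) + lam * D := by
            rw [Finset.sum_add_distrib, ← Finset.mul_sum, hD]
    have hsumB : ∑ j, (ζ j * u j * w j + (1/2) * w j ^ 2 + η j * w j)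
        ≤ (∑ j, ζ j * z j) - lam * D + (k:ℝ) * ε^2/2 + c₀ := by
      calc ∑ j, (ζ j * u j * w j + (1/2) * w j ^ 2 + η j * w j)
          ≤ ∑ j, (ζ j * z' j + ((1/2) * ε^2 - (1/2) * η j ^ 2)) := by
            apply Finset.sum_le_sum
            intro j _
            have h1 : ζ j * u j * w j = ζ j * z' j := by rw [mul_assoc, huw j]
            have h2 := hwη j
            have h3 : (1/2) * w j ^ 2 + η j * w j
                = (1/2) * (w j + η j)^2 - (1/2) * η j ^ 2 := by ring
            linarith
        _ = (∑ j, ζ j * z' j) + ((k:ℝ) * ((1/2) * ε^2) - ∑ j : Fin k, (1/2:ℝ) * η j ^ 2) := by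
            rw [Finset.sum_add_distrib, Finset.sum_sub_distrib, Finset.sum_const,
              Finset.card_univ, Fintype.card_fin, nsmul_eq_mul]
        _ = (∑ j, ζ j * z j) - lam * D + (k:ℝ) * ε^2/2 + c₀ := by
            rw [hsum_ζz', h10]
            ring
    linarith
  linarith

set_option maxHeartbeats 1000000 in
/-- The simplified S-lemma with interval bounds of Jiang–Li–Wu (Section 3.2): under
Assumption 3.2, the implication `c₁ ≤ h̄(x,u,w) ≤ c₂ ⟹ f(x,u,w) + v ≥ 0` holds if and only
if the SOCP system of the reformulation certifies nonnegativity. -/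
theorem stmt_19 (l k : ℕ) (δ e α b : Fin l → ℝ) (ζ η : Fin k → ℝ) (c₀ c₁ c₂ v : ℝ)
    (hc₁₂ : c₁ ≤ c₂) (hc₀ : c₀ = -(1/2) * ∑ j, η j ^ 2)
    (hfeas : ∃ (x : Fin l → ℝ) (u w : Fin k → ℝ),
      c₁ ≤ quadConBar α b x u w ∧ quadConBar α b x u w ≤ c₂)
    (hnd₁ : ¬ DegenerateCase l k α b c₁) (hnd₂ : ¬ DegenerateCase l k α b c₂)
    (hAne : Asmat l k α ≠ 0) :
    ((∀ (x : Fin l → ℝ) (u w : Fin k → ℝ),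
        c₁ ≤ quadConBar α b x u w → quadConBar α b x u w ≤ c₂ →
        0 ≤ quadObj δ e ζ η x u w + v) ↔
      (∀ (x y : Fin l → ℝ) (z : Fin k → ℝ),
        c₁ ≤ socpConLhs α b x y z → socpConLhs α b x y z ≤ c₂ →
        (∀ i, (1/2) * x i ^ 2 ≤ y i) →
        0 ≤ socpObj δ e ζ c₀ x y z + v)) := by
  constructor
  · -- (I₁) → (I₂)
    intro hI x y z hzc1 hzc2 hys
    rcases Nat.eq_zero_or_pos k with hk0 | hkpos
    · subst hk0
      have hc₀0 : c₀ = 0 := by simpa using hc₀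
      have hqex : ∃ q, α q ≠ 0 := by
        by_contra hno
        push_neg at hno
        apply hAne
        ext i j
        have hi : (i : ℕ) < l := by have := i.isLt; omega
        simp [Asmat, hi, hno]
      obtain ⟨q, hq⟩ := hqex
      have h1' : ∀ x' : Fin l → ℝ,
          c₁ ≤ ∑ i, ((1/2) * α i * x' i ^ 2 + b i * x' i) →
          (∑ i, ((1/2) * α i * x' i ^ 2 + b i * x' i)) ≤ c₂ →
          0 ≤ (∑ i, ((1/2) * δ i * x' i ^ 2 + e i * x' i)) + v := by
        intro x' hh1 hh2
        have h2 := hI x' (fun _ => 0) (fun _ => 0)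
          (by rw [quadConBar]; simpa using hh1)
          (by rw [quadConBar]; simpa using hh2)
        rw [quadObj] at h2
        simpa using h2
      have hres := key0 l δ e α b c₁ c₂ v q hq h1' x y hys
        (by rw [socpConLhs] at hzc1; simpa using hzc1)
        (by rw [socpConLhs] at hzc2; simpa using hzc2)
      rw [socpObj, hc₀0]
      simpa using hres
    · exact key1 l k hkpos δ e α b ζ η c₀ c₁ c₂ v hc₀ hI x y z hzc1 hzc2 hys
  · -- (I₂) → (I₁)
    intro hI x u w h1 h2
    have hcon : socpConLhs α b x (fun i => (1/2) * x i ^ 2) (fun j => u j * w j)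
        = quadConBar α b x u w := by
      rw [socpConLhs, quadConBar]
      congr 1
      apply Finset.sum_congr rfl
      intro i _
      ring
    have h3 := hI x (fun i => (1/2) * x i ^ 2) (fun j => u j * w j)
      (by rw [hcon]; exact h1) (by rw [hcon]; exact h2) (fun i => le_refl _)
    have h4 : socpObj δ e ζ c₀ x (fun i => (1/2) * x i ^ 2) (fun j => u j * w j)
        ≤ quadObj δ e ζ η x u w := by
      rw [socpObj, quadObj]
      have e1 : ∑ i, (δ i * ((fun i => (1/2) * x i ^ 2) i) + e i * x i)
          = ∑ i, ((1/2) * δ i * x i ^ 2 + e i * x i) := by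
        apply Finset.sum_congr rfl
        intro i _
        ring
      have e2 : ∑ j, (ζ j * u j * w j + (1/2) * w j ^ 2 + η j * w j)
          = (∑ j, ζ j * ((fun j => u j * w j) j)) + ∑ j, ((1/2) * w j ^ 2 + η j * w j) := by
        rw [← Finset.sum_add_distrib]
        apply Finset.sum_congr rfl
        intro j _
        ring
      have key : (∑ j, ((1/2) * w j ^ 2 + η j * w j)) + (1/2) * ∑ j, η j ^ 2
          = ∑ j, (1/2) * (w j + η j) ^ 2 := by
        rw [Finset.mul_sum, ← Finset.sum_add_distrib]
        apply Finset.sum_congr rfl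
        intro j _
        ring
      have pos : 0 ≤ ∑ j, (1/2) * (w j + η j) ^ 2 :=
        Finset.sum_nonneg (fun j _ => by positivity)
      rw [e1, e2]
      rw [hc₀]
      linarith
    linarith
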